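/- Let Θ be a channel, η a state, and Γ_{t,Θ,η}(T) = t·Θ(T) + (1−t)·tr[ηT]·1. If n ≥ 2 and 0 ≤ t ≤ 1/n, then for any POVMs A₁,…,Aₙ, the POVMs Γ_{t,Θ,η}∘A₁,…,Γ_{t,Θ,η}∘Aₙ are compatible. Explicitly, G(a₁,…,aₙ) = ∑ᵢ t·Θ(Aᵢ(aᵢ))·∏_{j≠i} tr[η Aⱼ(aⱼ)] + (1−tn)·∏ⱼ tr[η Aⱼ(aⱼ)]·1 is a joint observable for them. -/

import Mathlib

open scoped BigOperators ComplexOrder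
open Matrix Finset

abbrev Mat (d : ℕ) := Matrix (Fin d) (Fin d) ℂ

lemma psd_trace_nonneg {d : ℕ} {M : Mat d} (hM : M.PosSemidef) : 0 ≤ M.trace := by
  rw [Matrix.trace]
  refine Finset.sum_nonneg fun i _ => ?_
  have h := hM.dotProduct_mulVec_nonneg (Pi.single i 1)
  simpa [dotProduct, Matrix.mulVec, Pi.single_apply, Finset.mul_sum] using h

lemma trace_mul_nonneg' {d : ℕ} {P Q : Mat d} (hP : P.PosSemidef) (hQ : Q.PosSemidef) :
    0 ≤ (P * Q).trace := by
  classical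
  have key : ∀ S : Mat d, S.PosSemidef → S * S = P → 0 ≤ (P * Q).trace := by
    intro S hSp hSP
    rw [← hSP, ← Matrix.trace_mul_cycle S Q S]
    have h2 : (S * Q * S).PosSemidef := by
      have := hQ.mul_mul_conjTranspose_same S
      rwa [hSp.isHermitian.eq] at this
    exact psd_trace_nonneg h2
  open scoped MatrixOrder in
  exact key (CFC.sqrt P) (CFC.sqrt_nonneg P).posSemidef (CFC.sqrt_mul_sqrt_self P hP.nonneg)

lemma psd_smul' {d : ℕ} {M : Mat d} (hM : M.PosSemidef) {c : ℂ} (hc : 0 ≤ c) :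
    (c • M).PosSemidef := by
  obtain ⟨hre, him⟩ := Complex.nonneg_iff.mp hc
  refine Matrix.PosSemidef.of_dotProduct_mulVec_nonneg ?_ ?_
  · have : star c = c := by
      rw [Complex.star_def, Complex.conj_eq_iff_im]; exact him.symm
    rw [Matrix.IsHermitian, conjTranspose_smul, this, hM.1.eq]
  · intro x
    rw [Matrix.smul_mulVec, dotProduct_smul, smul_eq_mul]
    exact mul_nonneg hc (hM.dotProduct_mulVec_nonneg x)

lemma psd_sum {d : ℕ} {ι : Type*} (s : Finset ι) (F : ι → Mat d)
    (h : ∀ i ∈ s, (F i).PosSemidef) : (∑ i ∈ s, F i).PosSemidef :=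
  Finset.sum_induction F _ (fun _ _ ha hb => ha.add hb) Matrix.PosSemidef.zero h

section Comb
variable {n : ℕ} {Ω : Fin n → Type} [∀ i, Fintype (Ω i)] [∀ i, DecidableEq (Ω i)]

lemma filter_eq_piFinset (k : Fin n) (a : Ω k) :
    univ.filter (fun g : ∀ j, Ω j => g k = a)
      = Fintype.piFinset (Function.update (fun j => (univ : Finset (Ω j))) k {a}) := by
  ext g
  simp only [mem_filter, mem_univ, true_and, Fintype.mem_piFinset]
  constructor
  · intro h j
    rcases eq_or_ne j k with rfl | hj
    · simp [h]
    · simp [Function.update_of_ne hj]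
  · intro h
    simpa using h k

lemma sum_filter_prod (f : ∀ j, Ω j → ℂ) (k : Fin n) (a : Ω k) :
    ∑ g ∈ univ.filter (fun g : ∀ j, Ω j => g k = a), ∏ j, f j (g j)
      = f k a * ∏ j ∈ univ.erase k, ∑ b, f j b := by
  rw [filter_eq_piFinset, ← Finset.prod_univ_sum,
    ← Finset.mul_prod_erase univ _ (mem_univ k)]
  congr 1
  · simp
  · refine Finset.prod_congr rfl fun j hj => ?_
    rw [Function.update_of_ne (mem_erase.mp hj).1]

end Comb

section Comb2
variable {d n : ℕ} {Ω : Fin n → Type} [∀ i, Fintype (Ω i)] [∀ i, DecidableEq (Ω i)]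

lemma sum_filter_smul_same (f : ∀ j, Ω j → ℂ) (hf : ∀ j, ∑ b, f j b = 1)
    (k : Fin n) (a : Ω k) (M : Ω k → Mat d) :
    ∑ g ∈ univ.filter (fun g : ∀ j, Ω j => g k = a),
        (∏ j ∈ univ.erase k, f j (g j)) • M (g k) = M a := by
  have step : ∀ g ∈ univ.filter (fun g : ∀ j, Ω j => g k = a),
      (∏ j ∈ univ.erase k, f j (g j)) • M (g k)
        = (∏ j, (Function.update f k (fun _ => (1:ℂ))) j (g j)) • M a := by
    intro g hg
    have hgk : g k = a := (mem_filter.mp hg).2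
    rw [hgk]
    congr 1
    rw [← Finset.mul_prod_erase univ _ (mem_univ k), Function.update_self, one_mul]
    exact Finset.prod_congr rfl fun j hj => by
      rw [Function.update_of_ne (mem_erase.mp hj).1]
  rw [Finset.sum_congr rfl step, ← Finset.sum_smul,
    sum_filter_prod (Function.update f k (fun _ => (1:ℂ))) k a]
  have h1 : ∀ j ∈ univ.erase k, ∑ b, (Function.update f k (fun _ => (1:ℂ))) j b = 1 := by
    intro j hj
    rw [Function.update_of_ne (mem_erase.mp hj).1]; exact hf j
  rw [Finset.prod_congr rfl h1]
  simp

lemma filter_filter_eq_piFinset (k i : Fin n) (hik : i ≠ k) (a : Ω k) (b : Ω i) :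
    univ.filter (fun g : ∀ j, Ω j => g k = a ∧ g i = b)
      = Fintype.piFinset (Function.update
          (Function.update (fun j => (univ : Finset (Ω j))) k {a}) i {b}) := by
  ext g
  simp only [mem_filter, mem_univ, true_and, Fintype.mem_piFinset]
  constructor
  · rintro ⟨h1, h2⟩ j
    rcases eq_or_ne j i with rfl | hji
    · simp [h2]
    · rw [Function.update_of_ne hji]
      rcases eq_or_ne j k with rfl | hjk
      · simp [h1]
      · simp [Function.update_of_ne hjk]
  · intro h
    refine ⟨?_, ?_⟩
    · have := h k
      rwa [Function.update_of_ne (Ne.symm hik), Function.update_self, mem_singleton] at this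
    · have := h i
      rwa [Function.update_self, mem_singleton] at this

lemma sum_filter_smul_ne (f : ∀ j, Ω j → ℂ) (hf : ∀ j, ∑ b, f j b = 1)
    (k i : Fin n) (hik : i ≠ k) (a : Ω k) (M : Ω i → Mat d) :
    ∑ g ∈ univ.filter (fun g : ∀ j, Ω j => g k = a),
        (∏ j ∈ univ.erase i, f j (g j)) • M (g i) = f k a • ∑ b, M b := by
  classical
  rw [← Finset.sum_fiberwise_of_maps_to
      (g := fun g : ∀ j, Ω j => g i) (t := univ) (fun g _ => mem_univ (g i)),
    Finset.smul_sum]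
  refine Finset.sum_congr rfl fun b _ => ?_
  rw [Finset.filter_filter]
  have step : ∀ g ∈ univ.filter (fun g : ∀ j, Ω j => g k = a ∧ g i = b),
      (∏ j ∈ univ.erase i, f j (g j)) • M (g i)
        = (∏ j, (Function.update f i (fun _ => (1:ℂ))) j (g j)) • M b := by
    intro g hg
    have hgi : g i = b := (mem_filter.mp hg).2.2
    rw [hgi]
    congr 1
    rw [← Finset.mul_prod_erase univ _ (mem_univ i), Function.update_self, one_mul]
    exact Finset.prod_congr rfl fun j hj => by
      rw [Function.update_of_ne (mem_erase.mp hj).1]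
  rw [Finset.sum_congr rfl step, ← Finset.sum_smul,
    filter_filter_eq_piFinset k i hik a b, ← Finset.prod_univ_sum]
  congr 1
  set f' := Function.update f i (fun _ => (1:ℂ)) with hf'
  set T := Function.update (Function.update (fun j => (univ : Finset (Ω j))) k {a}) i {b}
    with hT
  have hki : k ∈ univ.erase i := mem_erase.mpr ⟨Ne.symm hik, mem_univ k⟩
  rw [← Finset.mul_prod_erase univ _ (mem_univ i),
    ← Finset.mul_prod_erase (univ.erase i) _ hki]
  have e1 : ∑ c ∈ T i, f' i c = 1 := by
    simp [hT, hf']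
  have e2 : ∑ c ∈ T k, f' k c = f k a := by
    rw [hT, hf', Function.update_of_ne (Ne.symm hik), Function.update_self,
      Function.update_of_ne (Ne.symm hik), Finset.sum_singleton]
  have e3 : ∀ j ∈ (univ.erase i).erase k, ∑ c ∈ T j, f' j c = 1 := by
    intro j hj
    obtain ⟨hjk, hj'⟩ := mem_erase.mp hj
    obtain ⟨hji, _⟩ := mem_erase.mp hj'
    rw [hT, hf', Function.update_of_ne hji, Function.update_of_ne hjk,
      Function.update_of_ne hji]
    exact hf j
  rw [e1, e2, Finset.prod_congr rfl e3]
  simp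

lemma sum_univ_smul (f : ∀ j, Ω j → ℂ) (hf : ∀ j, ∑ b, f j b = 1)
    (i : Fin n) (M : Ω i → Mat d) :
    ∑ g : ∀ j, Ω j, (∏ j ∈ univ.erase i, f j (g j)) • M (g i) = ∑ b, M b := by
  classical
  rw [← Finset.sum_fiberwise_of_maps_to
      (g := fun g : ∀ j, Ω j => g i) (t := univ) (fun g _ => mem_univ (g i))]
  exact Finset.sum_congr rfl fun b _ => sum_filter_smul_same f hf i b M

lemma sum_univ_prod (f : ∀ j, Ω j → ℂ) (hf : ∀ j, ∑ b, f j b = 1) :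
    ∑ g : ∀ j, Ω j, ∏ j, f j (g j) = 1 := by
  classical
  rw [← Fintype.piFinset_univ, ← Finset.prod_univ_sum]
  simp [hf]

end Comb2


/-- A POVM with finite outcome set `Ω`. -/
def IsPOVM {d : ℕ} {Ω : Type} [Fintype Ω] (A : Ω → Mat d) : Prop :=
  (∀ a, (A a).PosSemidef) ∧ ∑ a, A a = 1

/-- `G` is a joint observable for the family `A` of POVMs. -/
def IsJoint {d n : ℕ} {Ω : Fin n → Type} [∀ i, Fintype (Ω i)] [∀ i, DecidableEq (Ω i)]
    (A : ∀ i, Ω i → Mat d) (G : (∀ i, Ω i) → Mat d) : Prop :=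
  IsPOVM G ∧ ∀ (i : Fin n) (a : Ω i), ∑ g ∈ univ.filter (fun g => g i = a), G g = A i a

/-- The POVMs `A i` are compatible (jointly measurable). -/
def Compatible {d n : ℕ} {Ω : Fin n → Type} [∀ i, Fintype (Ω i)] [∀ i, DecidableEq (Ω i)]
    (A : ∀ i, Ω i → Mat d) : Prop :=
  ∃ G, IsJoint A G

/-- The noisy channel `Γ_{t,Θ,η}(T) = t·Θ(T) + (1−t)·tr[ηT]·1` breaks the
incompatibility of any set of `n` observables whenever `0 ≤ t ≤ 1/n`, with the explicit joint
observable `G(a₁,…,aₙ) = ∑ᵢ t·Θ(Aᵢ(aᵢ))·∏_{j≠i} tr[η Aⱼ(aⱼ)] + (1−tn)·∏ⱼ tr[η Aⱼ(aⱼ)]·1`. -/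
theorem noisy_channel_n_incompatibility_breaking {d n : ℕ} (hn : 2 ≤ n)
    (Θ : Mat d →ₗ[ℂ] Mat d) (hΘ1 : Θ 1 = 1)
    (hΘpos : ∀ T : Mat d, T.PosSemidef → (Θ T).PosSemidef)
    (η : Mat d) (hη : η.PosSemidef) (hη1 : η.trace = 1)
    (t : ℝ) (ht0 : 0 ≤ t) (ht : t ≤ 1 / n)
    (Ω : Fin n → Type) [∀ i, Fintype (Ω i)] [∀ i, DecidableEq (Ω i)]
    (A : ∀ i, Ω i → Mat d) (hA : ∀ i, IsPOVM (A i)) :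
    IsJoint
      (fun i a => (t : ℂ) • Θ (A i a) + (((1 - t : ℝ) : ℂ) * (η * A i a).trace) • (1 : Mat d))
      (fun g =>
        (∑ i, ((t : ℂ) * ∏ j ∈ Finset.univ.erase i, (η * A j (g j)).trace) • Θ (A i (g i))) +
          ((1 - (t : ℂ) * n) * ∏ j, (η * A j (g j)).trace) • (1 : Mat d)) ∧
    Compatible
      (fun i a => (t : ℂ) • Θ (A i a) + (((1 - t : ℝ) : ℂ) * (η * A i a).trace) • (1 : Mat d)) := by

  classical
  have hp : ∀ j, ∑ b, (η * A j b).trace = 1 := by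
    intro j
    rw [← Matrix.trace_sum, ← Finset.mul_sum, (hA j).2, mul_one, hη1]
  have hp0 : ∀ j b, (0:ℂ) ≤ (η * A j b).trace := fun j b =>
    trace_mul_nonneg' hη ((hA j).1 b)
  have hn1 : 1 ≤ n := le_trans one_le_two hn
  have hnR : (0:ℝ) < n := by
    have : (2:ℝ) ≤ n := by exact_mod_cast hn
    linarith
  have htn : t * n ≤ 1 := by
    have := mul_le_mul_of_nonneg_right ht (le_of_lt hnR)
    rwa [one_div, inv_mul_cancel₀ (ne_of_gt hnR)] at this
  have ht0C : (0:ℂ) ≤ (t:ℂ) := Complex.zero_le_real.mpr ht0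
  have htnC : (0:ℂ) ≤ 1 - (t:ℂ) * n := by
    have : ((1 - t * n : ℝ):ℂ) = 1 - (t:ℂ) * n := by push_cast; ring
    rw [← this]
    exact Complex.zero_le_real.mpr (by linarith)
  have hJ : IsJoint
      (fun i a => (t : ℂ) • Θ (A i a) + (((1 - t : ℝ) : ℂ) * (η * A i a).trace) • (1 : Mat d))
      (fun g =>
        (∑ i, ((t : ℂ) * ∏ j ∈ Finset.univ.erase i, (η * A j (g j)).trace) • Θ (A i (g i))) +
          ((1 - (t : ℂ) * n) * ∏ j, (η * A j (g j)).trace) • (1 : Mat d)) := by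
    refine ⟨⟨fun g => ?_, ?_⟩, fun k a => ?_⟩
    · -- positivity
      apply Matrix.PosSemidef.add
      · refine psd_sum univ _ fun i _ => psd_smul' (hΘpos _ ((hA i).1 _)) ?_
        exact mul_nonneg ht0C (Finset.prod_nonneg fun j _ => hp0 j _)
      · refine psd_smul' Matrix.PosSemidef.one ?_
        exact mul_nonneg htnC (Finset.prod_nonneg fun j _ => hp0 j _)
    · -- sums to one
      rw [Finset.sum_add_distrib, Finset.sum_comm]
      have h1 : ∀ i : Fin n, ∑ g : ∀ j, Ω j,
          ((t : ℂ) * ∏ j ∈ Finset.univ.erase i, (η * A j (g j)).trace) • Θ (A i (g i))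
            = (t : ℂ) • (1 : Mat d) := by
        intro i
        have e : ∑ g : ∀ j, Ω j,
            ((t : ℂ) * ∏ j ∈ Finset.univ.erase i, (η * A j (g j)).trace) • Θ (A i (g i))
              = (t : ℂ) • ∑ g : ∀ j, Ω j,
                (∏ j ∈ Finset.univ.erase i, (η * A j (g j)).trace) • Θ (A i (g i)) := by
          rw [Finset.smul_sum]
          exact Finset.sum_congr rfl fun g _ => mul_smul _ _ _
        rw [e, sum_univ_smul (fun j b => (η * A j b).trace) hp i (fun b => Θ (A i b)),
          ← map_sum, (hA i).2, hΘ1]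
      rw [Finset.sum_congr rfl fun i _ => h1 i, Finset.sum_const, card_univ,
        Fintype.card_fin]
      have h2 : ∑ g : ∀ j, Ω j,
          ((1 - (t : ℂ) * n) * ∏ j, (η * A j (g j)).trace) • (1 : Mat d)
            = (1 - (t : ℂ) * n) • (1 : Mat d) := by
        rw [← Finset.sum_smul, ← Finset.mul_sum,
          sum_univ_prod (fun j b => (η * A j b).trace) hp, mul_one]
      rw [h2, ← Nat.cast_smul_eq_nsmul ℂ, smul_smul, ← add_smul]
      have : (n : ℂ) * t + (1 - (t:ℂ) * n) = 1 := by ring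
      rw [this, one_smul]
    · -- marginals
      rw [Finset.sum_add_distrib, Finset.sum_comm]
      have hk : ∑ g ∈ univ.filter (fun g : ∀ j, Ω j => g k = a),
          ((t : ℂ) * ∏ j ∈ Finset.univ.erase k, (η * A j (g j)).trace) • Θ (A k (g k))
            = (t : ℂ) • Θ (A k a) := by
        have e : ∀ g ∈ univ.filter (fun g : ∀ j, Ω j => g k = a),
            ((t : ℂ) * ∏ j ∈ Finset.univ.erase k, (η * A j (g j)).trace) • Θ (A k (g k))
              = (t:ℂ) • ((∏ j ∈ Finset.univ.erase k, (η * A j (g j)).trace) • Θ (A k (g k))) :=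
          fun g _ => mul_smul _ _ _
        rw [Finset.sum_congr rfl e, ← Finset.smul_sum,
          sum_filter_smul_same (fun j b => (η * A j b).trace) hp k a (fun b => Θ (A k b))]
      have hne : ∀ i ∈ univ.erase k, ∑ g ∈ univ.filter (fun g : ∀ j, Ω j => g k = a),
          ((t : ℂ) * ∏ j ∈ Finset.univ.erase i, (η * A j (g j)).trace) • Θ (A i (g i))
            = ((t : ℂ) * (η * A k a).trace) • (1 : Mat d) := by
        intro i hi
        have hik : i ≠ k := (mem_erase.mp hi).1
        have e : ∀ g ∈ univ.filter (fun g : ∀ j, Ω j => g k = a),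
            ((t : ℂ) * ∏ j ∈ Finset.univ.erase i, (η * A j (g j)).trace) • Θ (A i (g i))
              = (t:ℂ) • ((∏ j ∈ Finset.univ.erase i, (η * A j (g j)).trace) • Θ (A i (g i))) :=
          fun g _ => mul_smul _ _ _
        rw [Finset.sum_congr rfl e, ← Finset.smul_sum,
          sum_filter_smul_ne (fun j b => (η * A j b).trace) hp k i hik a (fun b => Θ (A i b)),
          ← map_sum, (hA i).2, hΘ1, smul_smul]
      rw [← Finset.add_sum_erase univ _ (mem_univ k), hk,
        Finset.sum_congr rfl hne, Finset.sum_const, card_erase_of_mem (mem_univ k),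
        card_univ, Fintype.card_fin]
      have h2 : ∑ g ∈ univ.filter (fun g : ∀ j, Ω j => g k = a),
          ((1 - (t : ℂ) * n) * ∏ j, (η * A j (g j)).trace) • (1 : Mat d)
            = ((1 - (t : ℂ) * n) * (η * A k a).trace) • (1 : Mat d) := by
        rw [← Finset.sum_smul, ← Finset.mul_sum,
          sum_filter_prod (fun j b => (η * A j b).trace) k a]
        have : ∏ j ∈ univ.erase k, ∑ b, (η * A j b).trace = 1 :=
          Finset.prod_eq_one fun j _ => hp j
        rw [this, mul_one]
      rw [h2, add_assoc, ← Nat.cast_smul_eq_nsmul ℂ, smul_smul, ← add_smul]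
      congr 1
      rw [Nat.cast_sub hn1]
      push_cast
      ring
  exact ⟨hJ, ⟨_, hJ⟩⟩
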